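/- Let q = 2^h, k ≥ 1, gcd(i, hk) = 1, and let D = {⟨(u, u^(2^i))⟩_{F_q} : u ∈ F_{q^k}^*} ⊆ PG(2k-1, q). Then every projective line of PG(2k-1, q) meets D in exactly 0, 1, 3, or q - 1 points. -/

import Mathlib

section Aux

lemma char_two_of_card {F : Type*} [Field F] [Fintype F] {n : ℕ}
    (h : Fintype.card F = 2 ^ n) : CharP F 2 := by
  haveI : CharP F (ringChar F) := ringChar.charP F
  obtain ⟨m, hp, hcard⟩ := FiniteField.card F (ringChar F)
  have hdvd : ringChar F ∣ 2 ^ n := by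
    rw [← h, hcard]
    exact dvd_pow_self _ (by positivity)
  have h2 : ringChar F = 2 :=
    (Nat.prime_dvd_prime_iff_eq hp Nat.prime_two).mp (hp.dvd_of_dvd_pow hdvd)
  rwa [h2] at ‹CharP F (ringChar F)›

lemma pow_two_pow_card {F : Type*} [Field F] [Fintype F] {n : ℕ}
    (h : Fintype.card F = 2 ^ n) (x : F) : x ^ 2 ^ n = x := by
  rw [← h]; exact FiniteField.pow_card x

lemma pow_pow_mul {F : Type*} [Field F] {i : ℕ} (x : F) (hx : x ^ 2 ^ i = x) :
    ∀ a : ℕ, x ^ 2 ^ (i * a) = x := by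
  intro a
  induction a with
  | zero => simp
  | succ a ih =>
      have : 2 ^ (i * (a + 1)) = 2 ^ (i * a) * 2 ^ i := by ring
      rw [this, pow_mul, ih, hx]

lemma fixed_points {K : Type*} [Field K] [Fintype K] {m i : ℕ}
    (hm : Fintype.card K = 2 ^ m) (hm1 : 1 ≤ m) (hgcd : Nat.gcd i m = 1)
    (x : K) (hx : x ^ 2 ^ i = x) : x = 0 ∨ x = 1 := by
  have hx2 : x ^ 2 = x := by
    rcases eq_or_lt_of_le hm1 with hm1' | hm2
    · have := pow_two_pow_card hm x
      rwa [← hm1', pow_one] at this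
    · obtain ⟨a, -, ha⟩ := Nat.exists_mul_mod_eq_one_of_coprime hgcd hm2
      set b := i * a / m with hb
      have hdm : i * a = m * b + 1 := by
        conv_lhs => rw [← Nat.div_add_mod (i * a) m]
        rw [ha, hb]
      have h1 : x ^ 2 ^ (i * a) = x := pow_pow_mul x hx a
      have h2 : x ^ 2 ^ (m * b) = x := pow_pow_mul x (pow_two_pow_card hm x) b
      calc x ^ 2 = (x ^ 2 ^ (m * b)) ^ 2 := by rw [h2]
        _ = x ^ (2 ^ (m * b) * 2) := (pow_mul x _ 2).symm
        _ = x ^ 2 ^ (m * b + 1) := by rw [pow_succ]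
        _ = x ^ 2 ^ (i * a) := by rw [hdm]
        _ = x := h1
  rcases eq_or_ne x 0 with h0 | h0
  · exact Or.inl h0
  · right
    have : x * x = x * 1 := by rw [mul_one, ← sq, hx2]
    exact mul_left_cancel₀ h0 this

lemma frob_pow_inj {K : Type*} [Field K] [CharP K 2] (i : ℕ) :
    Function.Injective (fun x : K => x ^ 2 ^ i) := by
  haveI : Fact (Nat.Prime 2) := ⟨Nat.prime_two⟩
  intro x y hxy
  have h1 : (x - y) ^ 2 ^ i = 0 := by
    rw [sub_pow_char_pow]; simpa [sub_eq_zero] using hxy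
  have h0 : x - y = 0 := pow_eq_zero_iff (n := 2 ^ i) (by positivity) |>.mp h1
  exact sub_eq_zero.mp h0

lemma sq_mem_range_iff {Fq K : Type*} [Field Fq] [Field K] [Algebra Fq K]
    [Finite Fq] [CharP Fq 2] [CharP K 2] (x : K) :
    x ^ 2 ∈ Set.range (algebraMap Fq K) ↔ x ∈ Set.range (algebraMap Fq K) := by
  constructor
  · rintro ⟨c, hc⟩
    have hinj : Function.Injective (fun a : Fq => a ^ 2) := by
      simpa [pow_one] using frob_pow_inj (K := Fq) 1
    obtain ⟨d, hd⟩ := Finite.surjective_of_injective hinj c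
    have hd' : d ^ 2 = c := hd
    refine ⟨d, frob_pow_inj (K := K) 1 ?_⟩
    simp only [pow_one]
    rw [hc.symm, ← hd', map_pow]
  · rintro ⟨c, hc⟩
    exact ⟨c ^ 2, by rw [map_pow, hc]⟩

lemma pow_mem_range_iff {Fq K : Type*} [Field Fq] [Field K] [Algebra Fq K]
    [Finite Fq] [CharP Fq 2] [CharP K 2] (i : ℕ) (x : K) :
    x ^ 2 ^ i ∈ Set.range (algebraMap Fq K) ↔ x ∈ Set.range (algebraMap Fq K) := by
  induction i with
  | zero => simp
  | succ n ih =>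
      have : x ^ 2 ^ (n + 1) = (x ^ 2 ^ n) ^ 2 := by
        rw [← pow_mul, pow_succ]
      rw [this, sq_mem_range_iff, ih]

lemma pow_surj_on_range {Fq K : Type*} [Field Fq] [Field K] [Algebra Fq K]
    [Finite Fq] [CharP Fq 2] [CharP K 2] (i : ℕ) (c : Fq) :
    ∃ d : Fq, (algebraMap Fq K d) ^ 2 ^ i = algebraMap Fq K c := by
  have hinj : Function.Injective (fun a : Fq => a ^ 2 ^ i) := frob_pow_inj i
  obtain ⟨d, hd⟩ := Finite.surjective_of_injective hinj c
  have hd' : d ^ 2 ^ i = c := hd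
  exact ⟨d, by rw [← map_pow, hd']⟩

end Aux

/-- Let `q = 2^h`, `K = F_{q^k}`, `gcd(i, hk) = 1`, and let
`D = {⟨(u, u^(2^i))⟩_{F_q} : u ∈ K^*} ⊆ PG(2k-1, q)`. Every projective line of
`PG(2k-1, q)` (i.e. `2`-dimensional `F_q`-subspace `L` of `K × K`) meets `D` in
exactly `0`, `1`, `3` or `q - 1` points. -/
theorem lines_meet_direction_set (h k i : ℕ) (hh : 1 ≤ h) (hk : 1 ≤ k)
    (hgcd : Nat.gcd i (h * k) = 1)
    (Fq K : Type) [Field Fq] [Field K] [Algebra Fq K]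
    [Fintype Fq] [Fintype K]
    (hq : Fintype.card Fq = 2 ^ h) (hK : Fintype.card K = 2 ^ (h * k))
    (L : Submodule Fq (K × K)) (hL : Module.finrank Fq L = 2) :
    {P : Submodule Fq (K × K) |
        (∃ u : K, u ≠ 0 ∧ P = Submodule.span Fq {((u, u ^ 2 ^ i) : K × K)}) ∧
        P ≤ L}.ncard = 0 ∨
    {P : Submodule Fq (K × K) |
        (∃ u : K, u ≠ 0 ∧ P = Submodule.span Fq {((u, u ^ 2 ^ i) : K × K)}) ∧
        P ≤ L}.ncard = 1 ∨
    {P : Submodule Fq (K × K) |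
        (∃ u : K, u ≠ 0 ∧ P = Submodule.span Fq {((u, u ^ 2 ^ i) : K × K)}) ∧
        P ≤ L}.ncard = 3 ∨
    {P : Submodule Fq (K × K) |
        (∃ u : K, u ≠ 0 ∧ P = Submodule.span Fq {((u, u ^ 2 ^ i) : K × K)}) ∧
        P ≤ L}.ncard = 2 ^ h - 1 := by
  classical
  haveI : CharP Fq 2 := char_two_of_card hq
  haveI : CharP K 2 := char_two_of_card hK
  haveI : Fact (Nat.Prime 2) := ⟨Nat.prime_two⟩
  have hm1 : 1 ≤ h * k := Nat.one_le_iff_ne_zero.mpr (by positivity)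
  have hfix : ∀ x : K, x ^ 2 ^ i = x → x = 0 ∨ x = 1 := fun x hx =>
    fixed_points hK hm1 hgcd x hx
  have hinjσ : Function.Injective (fun x : K => x ^ 2 ^ i) := frob_pow_inj i
  have hamap : Function.Injective (algebraMap Fq K) := (algebraMap Fq K).injective
  have hadd : ∀ x y : K, (x + y) ^ 2 ^ i = x ^ 2 ^ i + y ^ 2 ^ i := fun x y =>
    add_pow_char_pow x y 2 i
  set S : Set K := {u : K | ((u, u ^ 2 ^ i) : K × K) ∈ L} with hSdef
  -- rewrite the point set as an image
  have hTset : {P : Submodule Fq (K × K) |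
      (∃ u : K, u ≠ 0 ∧ P = Submodule.span Fq {((u, u ^ 2 ^ i) : K × K)}) ∧ P ≤ L}
      = (fun u : K => Submodule.span Fq {((u, u ^ 2 ^ i) : K × K)}) '' (S \ {0}) := by
    ext P
    simp only [Set.mem_setOf_eq, Set.mem_image, Set.mem_diff, Set.mem_singleton_iff]
    constructor
    · rintro ⟨⟨u, hu, rfl⟩, hPL⟩
      exact ⟨u, ⟨(Submodule.span_singleton_le_iff_mem _ _).mp hPL, hu⟩, rfl⟩
    · rintro ⟨u, ⟨huS, hu⟩, rfl⟩
      exact ⟨⟨u, hu, rfl⟩, (Submodule.span_singleton_le_iff_mem _ _).mpr huS⟩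
  have hinjP : Set.InjOn (fun u : K => Submodule.span Fq {((u, u ^ 2 ^ i) : K × K)})
      (S \ {0}) := by
    rintro u ⟨-, hu⟩ v ⟨-, hv⟩ hspan
    simp only [Set.mem_singleton_iff] at hu hv
    change Submodule.span Fq {((u, u ^ 2 ^ i) : K × K)}
      = Submodule.span Fq {((v, v ^ 2 ^ i) : K × K)} at hspan
    have hv_mem : ((v, v ^ 2 ^ i) : K × K) ∈
        Submodule.span Fq {((u, u ^ 2 ^ i) : K × K)} := by
      rw [hspan]; exact Submodule.mem_span_singleton_self _
    obtain ⟨a, ha⟩ := Submodule.mem_span_singleton.mp hv_mem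
    rw [Prod.smul_mk, Prod.ext_iff] at ha
    obtain ⟨h1, h2⟩ := ha
    simp only [Algebra.smul_def] at h1 h2
    have hu2 : u ^ 2 ^ i ≠ 0 := pow_ne_zero _ hu
    have h4 : (algebraMap Fq K a) ^ 2 ^ i = algebraMap Fq K a := by
      apply mul_right_cancel₀ hu2
      rw [h2, ← h1, mul_pow]
    rcases hfix _ h4 with h0 | h1'
    · exact absurd (by rw [← h1, h0, zero_mul]) hv
    · rw [h1', one_mul] at h1
      exact h1
  rw [hTset, Set.ncard_image_of_injOn hinjP]
  -- basic properties of S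
  have hS0 : (0 : K) ∈ S := by
    have hz : ((0 : K)) ^ 2 ^ i = 0 := zero_pow (by positivity)
    show ((0 : K), (0 : K) ^ 2 ^ i) ∈ L
    rw [hz]
    exact L.zero_mem
  have hSadd : ∀ {x y : K}, x ∈ S → y ∈ S → x + y ∈ S := by
    intro x y hx hy
    show ((x + y), (x + y) ^ 2 ^ i) ∈ L
    rw [hadd]
    exact L.add_mem hx hy
  by_cases hc1 : ∀ x ∈ S, x = 0
  · left
    have : S \ {0} = ∅ := by
      ext x; simp only [Set.mem_diff, Set.mem_singleton_iff, Set.mem_empty_iff_false,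
        iff_false, not_and, not_not]
      exact hc1 x
    rw [this, Set.ncard_empty]
  push_neg at hc1
  obtain ⟨u, huS, hu0⟩ := hc1
  have hu2 : u ^ 2 ^ i ≠ 0 := pow_ne_zero _ hu0
  by_cases hc2 : ∀ x ∈ S, x = 0 ∨ x = u
  · right; left
    have : S \ {0} = {u} := by
      ext x
      simp only [Set.mem_diff, Set.mem_singleton_iff]
      constructor
      · rintro ⟨hxS, hx0⟩
        rcases hc2 x hxS with h' | h'
        · exact absurd h' hx0
        · exact h'
      · rintro rfl
        exact ⟨huS, hu0⟩
    rw [this, Set.ncard_singleton]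
  push_neg at hc2
  obtain ⟨v, hvS, hv0, hvu⟩ := hc2
  have hv2 : v ^ 2 ^ i ≠ 0 := pow_ne_zero _ hv0
  by_cases hcv : ∃ c : Fq, v = algebraMap Fq K c * u
  · -- case q - 1
    right; right; right
    obtain ⟨c, hc⟩ := hcv
    have hc'0 : algebraMap Fq K c ≠ 0 := by
      intro hz; rw [hz, zero_mul] at hc; exact hv0 hc
    have hc'1 : algebraMap Fq K c ≠ 1 := by
      intro hone; rw [hone, one_mul] at hc; exact hvu hc
    have hce : (algebraMap Fq K c) ^ 2 ^ i ≠ algebraMap Fq K c := by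
      intro heq
      rcases hfix _ heq with h' | h'
      · exact hc'0 h'
      · exact hc'1 h'
    set e : K := (algebraMap Fq K c) ^ 2 ^ i - algebraMap Fq K c with hedef
    have he0 : e ≠ 0 := sub_ne_zero.mpr hce
    obtain ⟨d, hd⟩ := (pow_mem_range_iff (Fq := Fq) i (algebraMap Fq K c)).mpr ⟨c, rfl⟩
    have hf : algebraMap Fq K (d - c) = e := by rw [map_sub, hd, hedef]
    have hf0 : d - c ≠ 0 := by
      intro hz; apply he0; rw [← hf, hz, map_zero]
    -- (0, u^σ) ∈ L
    have hm3 : ((v, v ^ 2 ^ i) : K × K) - c • ((u, u ^ 2 ^ i) : K × K) ∈ L :=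
      L.sub_mem hvS (L.smul_mem c huS)
    have hveq : ((v, v ^ 2 ^ i) : K × K) - c • ((u, u ^ 2 ^ i) : K × K)
        = ((0 : K), e * u ^ 2 ^ i) := by
      rw [Prod.smul_mk, Prod.mk_sub_mk, Prod.mk.injEq]
      simp only [Algebra.smul_def]
      constructor
      · rw [hc, sub_self]
      · rw [hc, mul_pow, hedef]
        ring
    have hm4 : (((0 : K), u ^ 2 ^ i) : K × K) ∈ L := by
      have hmem : (((0 : K), e * u ^ 2 ^ i) : K × K) ∈ L := hveq ▸ hm3
      have hsm := L.smul_mem (d - c)⁻¹ hmem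
      have heq : (d - c)⁻¹ • (((0 : K), e * u ^ 2 ^ i) : K × K)
          = (((0 : K), u ^ 2 ^ i) : K × K) := by
        rw [Prod.smul_mk, Prod.mk.injEq]
        simp only [Algebra.smul_def, map_inv₀, hf]
        constructor
        · rw [mul_zero]
        · rw [inv_mul_cancel_left₀ he0]
      rwa [heq] at hsm
    -- L is the span of these two vectors
    have hLI : LinearIndependent Fq
        ![((u, u ^ 2 ^ i) : K × K), (((0 : K), u ^ 2 ^ i) : K × K)] := by
      rw [LinearIndependent.pair_iff]
      intro s t hst
      rw [Prod.smul_mk, Prod.smul_mk, Prod.mk_add_mk, Prod.mk_eq_zero] at hst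
      obtain ⟨h1, h2⟩ := hst
      simp only [Algebra.smul_def] at h1 h2
      rw [mul_zero, add_zero] at h1
      have hs : s = 0 := by
        rcases mul_eq_zero.mp h1 with h' | h'
        · exact hamap (by rw [h', map_zero])
        · exact absurd h' hu0
      rw [hs, map_zero, zero_mul, zero_add] at h2
      have ht : t = 0 := by
        rcases mul_eq_zero.mp h2 with h' | h'
        · exact hamap (by rw [h', map_zero])
        · exact absurd h' hu2
      exact ⟨hs, ht⟩
    have hspanL : Submodule.span Fq
        {((u, u ^ 2 ^ i) : K × K), (((0 : K), u ^ 2 ^ i) : K × K)} = L := by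
      apply Submodule.eq_of_le_of_finrank_eq
      · rw [Submodule.span_le]
        rintro x hx
        rcases hx with h' | h'
        · rw [h']; exact huS
        · rw [Set.mem_singleton_iff] at h'
          rw [h']; exact hm4
      · rw [hL]
        have hcard := finrank_span_eq_card (R := Fq) hLI
        have hrange : Set.range ![((u, u ^ 2 ^ i) : K × K), (((0 : K), u ^ 2 ^ i) : K × K)]
            = {((u, u ^ 2 ^ i) : K × K), (((0 : K), u ^ 2 ^ i) : K × K)} := by
          simp only [Matrix.range_cons, Matrix.range_empty, Set.union_empty,
            Set.union_singleton]
          exact Set.pair_comm _ _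
        rw [hrange] at hcard
        rw [hcard]
        simp
    -- characterize S
    have hSeq : S = (fun a : Fq => algebraMap Fq K a * u) '' Set.univ := by
      ext w
      simp only [Set.mem_image, Set.mem_univ, true_and]
      constructor
      · intro hw
        have hw' : ((w, w ^ 2 ^ i) : K × K) ∈ Submodule.span Fq
            {((u, u ^ 2 ^ i) : K × K), (((0 : K), u ^ 2 ^ i) : K × K)} := by
          rw [hspanL]; exact hw
        obtain ⟨a, b, hab⟩ := Submodule.mem_span_pair.mp hw'
        rw [Prod.smul_mk, Prod.smul_mk, Prod.mk_add_mk, Prod.mk.injEq] at hab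
        obtain ⟨h1, h2⟩ := hab
        refine ⟨a, ?_⟩
        rw [← h1, Algebra.smul_def, Algebra.smul_def, mul_zero, add_zero]
      · rintro ⟨a, rfl⟩
        obtain ⟨b, hb⟩ := (pow_mem_range_iff (Fq := Fq) i (algebraMap Fq K a)).mpr ⟨a, rfl⟩
        show ((algebraMap Fq K a * u, (algebraMap Fq K a * u) ^ 2 ^ i) : K × K) ∈ L
        rw [← hspanL]
        apply Submodule.mem_span_pair.mpr
        refine ⟨a, b - a, ?_⟩
        rw [Prod.smul_mk, Prod.smul_mk, Prod.mk_add_mk, Prod.mk.injEq]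
        simp only [Algebra.smul_def, map_sub]
        constructor
        · rw [mul_zero, add_zero]
        · rw [mul_pow, ← hb]
          ring
    -- count
    have hdiff : S \ {0} = (fun a : Fq => algebraMap Fq K a * u) '' {a : Fq | a ≠ 0} := by
      rw [hSeq]
      ext x
      simp only [Set.mem_diff, Set.mem_image, Set.mem_univ, true_and,
        Set.mem_singleton_iff, Set.mem_setOf_eq]
      constructor
      · rintro ⟨⟨a, rfl⟩, hx0⟩
        refine ⟨a, ?_, rfl⟩
        intro hz
        apply hx0
        rw [hz, map_zero, zero_mul]
      · rintro ⟨a, ha0, rfl⟩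
        refine ⟨⟨a, rfl⟩, ?_⟩
        exact mul_ne_zero (fun hz => ha0 (hamap (by rw [hz, map_zero]))) hu0
    have hinj2 : Set.InjOn (fun a : Fq => algebraMap Fq K a * u) {a : Fq | a ≠ 0} := by
      intro a _ b _ hab
      have : algebraMap Fq K a = algebraMap Fq K b := mul_right_cancel₀ hu0 hab
      exact hamap this
    rw [hdiff, Set.ncard_image_of_injOn hinj2]
    have huniv : {a : Fq | a ≠ 0} = (Set.univ : Set Fq) \ {0} := by
      ext a; simp
    rw [huniv, Set.ncard_diff_singleton_of_mem (Set.mem_univ 0), Set.ncard_univ,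
      Nat.card_eq_fintype_card, hq]
  · -- case 3
    right; right; left
    have hLI : LinearIndependent Fq
        ![((u, u ^ 2 ^ i) : K × K), ((v, v ^ 2 ^ i) : K × K)] := by
      rw [LinearIndependent.pair_iff]
      intro s t hst
      rw [Prod.smul_mk, Prod.smul_mk, Prod.mk_add_mk, Prod.mk_eq_zero] at hst
      obtain ⟨h1, h2⟩ := hst
      simp only [Algebra.smul_def] at h1 h2
      have ht : t = 0 := by
        by_contra ht0
        have ht' : algebraMap Fq K t ≠ 0 := fun hz => ht0 (hamap (by rw [hz, map_zero]))
        apply hcv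
        refine ⟨t⁻¹ * (-s), ?_⟩
        rw [map_mul, map_inv₀, map_neg, eq_comm, mul_assoc,
          inv_mul_eq_iff_eq_mul₀ ht']
        linear_combination -h1
      rw [ht, map_zero, zero_mul, add_zero] at h1
      have hs : s = 0 := by
        rcases mul_eq_zero.mp h1 with h' | h'
        · exact hamap (by rw [h', map_zero])
        · exact absurd h' hu0
      exact ⟨hs, ht⟩
    have hspanL : Submodule.span Fq
        {((u, u ^ 2 ^ i) : K × K), ((v, v ^ 2 ^ i) : K × K)} = L := by
      apply Submodule.eq_of_le_of_finrank_eq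
      · rw [Submodule.span_le]
        rintro x hx
        rcases hx with h' | h'
        · rw [h']; exact huS
        · rw [Set.mem_singleton_iff] at h'
          rw [h']; exact hvS
      · rw [hL]
        have hcard := finrank_span_eq_card (R := Fq) hLI
        have hrange : Set.range ![((u, u ^ 2 ^ i) : K × K), ((v, v ^ 2 ^ i) : K × K)]
            = {((u, u ^ 2 ^ i) : K × K), ((v, v ^ 2 ^ i) : K × K)} := by
          simp only [Matrix.range_cons, Matrix.range_empty, Set.union_empty,
            Set.union_singleton]
          exact Set.pair_comm _ _
        rw [hrange] at hcard
        rw [hcard]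
        simp
    -- S ⊆ {0, u, v, u + v}
    have hSsub : ∀ w ∈ S, w = 0 ∨ w = u ∨ w = v ∨ w = u + v := by
      intro w hw
      have hw' : ((w, w ^ 2 ^ i) : K × K) ∈ Submodule.span Fq
          {((u, u ^ 2 ^ i) : K × K), ((v, v ^ 2 ^ i) : K × K)} := by
        rw [hspanL]; exact hw
      obtain ⟨a, b, hab⟩ := Submodule.mem_span_pair.mp hw'
      rw [Prod.smul_mk, Prod.smul_mk, Prod.mk_add_mk, Prod.mk.injEq] at hab
      obtain ⟨h1, h2⟩ := hab
      simp only [Algebra.smul_def] at h1 h2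
      have hwσ : w ^ 2 ^ i = (algebraMap Fq K a) ^ 2 ^ i * u ^ 2 ^ i
          + (algebraMap Fq K b) ^ 2 ^ i * v ^ 2 ^ i := by
        rw [← h1, hadd, mul_pow, mul_pow]
      have hkey : ((algebraMap Fq K a) ^ 2 ^ i - algebraMap Fq K a) * u ^ 2 ^ i
          = (algebraMap Fq K b - (algebraMap Fq K b) ^ 2 ^ i) * v ^ 2 ^ i := by
        linear_combination -hwσ - h2
      have ha' : (algebraMap Fq K a) ^ 2 ^ i = algebraMap Fq K a := by
        by_contra he1
        have he1' : (algebraMap Fq K a) ^ 2 ^ i - algebraMap Fq K a ≠ 0 :=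
          sub_ne_zero.mpr he1
        have he2' : algebraMap Fq K b - (algebraMap Fq K b) ^ 2 ^ i ≠ 0 := by
          intro hz
          rw [hz, zero_mul] at hkey
          rcases mul_eq_zero.mp hkey with h' | h'
          · exact he1' h'
          · exact hu2 h'
        obtain ⟨d1, hd1⟩ := (pow_mem_range_iff (Fq := Fq) i (algebraMap Fq K a)).mpr ⟨a, rfl⟩
        obtain ⟨d2, hd2⟩ := (pow_mem_range_iff (Fq := Fq) i (algebraMap Fq K b)).mpr ⟨b, rfl⟩
        have hf1 : algebraMap Fq K (d1 - a) = (algebraMap Fq K a) ^ 2 ^ i - algebraMap Fq K a := by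
          rw [map_sub, hd1]
        have hf2 : algebraMap Fq K (b - d2) = algebraMap Fq K b - (algebraMap Fq K b) ^ 2 ^ i := by
          rw [map_sub, hd2]
        have hf10 : (d1 - a) ≠ 0 := fun hz => he1' (by rw [← hf1, hz, map_zero])
        have hf20 : (b - d2) ≠ 0 := fun hz => he2' (by rw [← hf2, hz, map_zero])
        -- v ^ σ = algebraMap g * u ^ σ
        have hvσ : v ^ 2 ^ i = algebraMap Fq K ((b - d2)⁻¹ * (d1 - a)) * u ^ 2 ^ i := by
          rw [map_mul, map_inv₀, hf1, hf2, mul_assoc, hkey,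
            inv_mul_cancel_left₀ he2']
        obtain ⟨g, hg⟩ := pow_surj_on_range (K := K) i ((b - d2)⁻¹ * (d1 - a))
        have hveq2 : v = algebraMap Fq K g * u := by
          apply hinjσ
          show v ^ 2 ^ i = (algebraMap Fq K g * u) ^ 2 ^ i
          rw [mul_pow, hg, hvσ]
        exact hcv ⟨g, hveq2⟩
      have hb' : (algebraMap Fq K b) ^ 2 ^ i = algebraMap Fq K b := by
        rw [ha', sub_self, zero_mul] at hkey
        have hz := (mul_eq_zero.mp hkey.symm).resolve_right hv2
        exact (sub_eq_zero.mp hz).symm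
      have hval : ∀ r : Fq, (algebraMap Fq K r) ^ 2 ^ i = algebraMap Fq K r →
          algebraMap Fq K r = 0 ∨ algebraMap Fq K r = 1 := fun r hr => hfix _ hr
      rcases hval a ha' with ha0 | ha1 <;> rcases hval b hb' with hb0 | hb1
      · left; rw [← h1, ha0, hb0, zero_mul, zero_mul, add_zero]
      · right; right; left; rw [← h1, ha0, hb1, zero_mul, one_mul, zero_add]
      · right; left; rw [← h1, ha1, hb0, one_mul, zero_mul, add_zero]
      · right; right; right; rw [← h1, ha1, hb1, one_mul, one_mul]
    -- distinctness
    have hneg : ∀ x : K, -x = x := fun x => CharTwo.neg_eq x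
    have huv0 : u + v ≠ 0 := by
      intro hz
      apply hvu
      have hveq : v = -u := eq_neg_of_add_eq_zero_right hz
      rw [hveq, hneg]
    have hSset : S \ {0} = {u, v, u + v} := by
      ext x
      simp only [Set.mem_diff, Set.mem_singleton_iff, Set.mem_insert_iff]
      constructor
      · rintro ⟨hxS, hx0⟩
        rcases hSsub x hxS with h' | h' | h' | h'
        · exact absurd h' hx0
        · exact Or.inl h'
        · exact Or.inr (Or.inl h')
        · exact Or.inr (Or.inr h')
      · rintro (rfl | rfl | rfl)
        · exact ⟨huS, hu0⟩
        · exact ⟨hvS, hv0⟩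
        · exact ⟨hSadd huS hvS, huv0⟩
    rw [hSset]
    have h1 : u ∉ ({v, u + v} : Set K) := by
      simp only [Set.mem_insert_iff, Set.mem_singleton_iff]
      push_neg
      refine ⟨fun hz => hvu hz.symm, fun hz => hv0 (left_eq_add.mp hz)⟩
    have h2 : v ∉ ({u + v} : Set K) := by
      simp only [Set.mem_singleton_iff]
      intro hz
      exact hu0 (right_eq_add.mp hz)
    rw [Set.ncard_insert_of_notMem h1, Set.ncard_insert_of_notMem h2, Set.ncard_singleton]
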